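/- arXiv:2505.21400 — 2 statements merged into one kernel-verified Lean document; each statement's English description precedes it below -/
import Mathlib

section
/- The total correlation of a random vector is bounded by the sum of single-coordinate mutual informations: KL(p_X || ∏_{i=1}^L p_{X^{(i)}}) ≤ ∑_{i=1}^L I(X^{(i)}; X^{(-i)}). -/
open scoped BigOperators
noncomputable section

variable {L : ℕ} {𝕏 : Type*} [Fintype 𝕏] [DecidableEq 𝕏]

/-- Marginal distribution of the i-th coordinate. -/
def margCoord (p : (Fin L → 𝕏) → ℝ) (i : Fin L) (a : 𝕏) : ℝ :=
  ∑ x : Fin L → 𝕏, if x i = a then p x else 0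

/-- Joint marginal distribution of all coordinates except `i`. -/
def margRest (p : (Fin L → 𝕏) → ℝ) (i : Fin L)
    (g : {j : Fin L // j ≠ i} → 𝕏) : ℝ :=
  ∑ x : Fin L → 𝕏, if (fun j : {j : Fin L // j ≠ i} => x j.1) = g then p x else 0

/-- Mutual information `I(X^{(i)}; X^{(-i)})`. -/
def miCoordRest (p : (Fin L → 𝕏) → ℝ) (i : Fin L) : ℝ :=
  ∑ x : Fin L → 𝕏,
    p x * Real.log (p x /
      (margCoord p i (x i) * margRest p i (fun j => x j.1)))

/-- Prefix marginal: distribution of the first `k` coordinates (as a function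
of the full vector). -/
def pA (p : (Fin L → 𝕏) → ℝ) (k : ℕ) (x : Fin L → 𝕏) : ℝ :=
  ∑ y : Fin L → 𝕏, if ∀ j : Fin L, (j : ℕ) < k → y j = x j then p y else 0

/-- Marginal of all coordinates except `i`, as a function of the full vector. -/
def pQ (p : (Fin L → 𝕏) → ℝ) (i : Fin L) (x : Fin L → 𝕏) : ℝ :=
  ∑ y : Fin L → 𝕏, if ∀ j : Fin L, j ≠ i → y j = x j then p y else 0

/-- The "ratio" distribution used in the Gibbs step. -/
def pR (p : (Fin L → 𝕏) → ℝ) (i : Fin L) (x : Fin L → 𝕏) : ℝ :=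
  pA p ((i : ℕ) + 1) x * pQ p i x / pA p (i : ℕ) x

lemma pQ_eq (p : (Fin L → 𝕏) → ℝ) (i : Fin L) (x : Fin L → 𝕏) :
    margRest p i (fun j => x j.1) = pQ p i x := by
  unfold margRest pQ
  apply Finset.sum_congr rfl
  intro y _
  apply if_congr _ rfl rfl
  rw [funext_iff]
  constructor
  · intro h j hj; exact h ⟨j, hj⟩
  · intro h j; exact h j.1 j.2

lemma pA_nonneg (p : (Fin L → 𝕏) → ℝ) (hp0 : ∀ x, 0 ≤ p x) (k : ℕ) (x : Fin L → 𝕏) :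
    0 ≤ pA p k x :=
  Finset.sum_nonneg fun y _ => by split <;> [exact hp0 y; exact le_rfl]

lemma pQ_nonneg (p : (Fin L → 𝕏) → ℝ) (hp0 : ∀ x, 0 ≤ p x) (i : Fin L) (x : Fin L → 𝕏) :
    0 ≤ pQ p i x :=
  Finset.sum_nonneg fun y _ => by split <;> [exact hp0 y; exact le_rfl]

lemma le_pA (p : (Fin L → 𝕏) → ℝ) (hp0 : ∀ x, 0 ≤ p x) (k : ℕ) (x : Fin L → 𝕏) :
    p x ≤ pA p k x := by
  have h := Finset.single_le_sum
    (f := fun y : Fin L → 𝕏 => if ∀ j : Fin L, (j : ℕ) < k → y j = x j then p y else 0)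
    (fun y _ => by split <;> [exact hp0 y; exact le_rfl]) (Finset.mem_univ x)
  simpa [pA] using h

lemma le_pQ (p : (Fin L → 𝕏) → ℝ) (hp0 : ∀ x, 0 ≤ p x) (i : Fin L) (x : Fin L → 𝕏) :
    p x ≤ pQ p i x := by
  have h := Finset.single_le_sum
    (f := fun y : Fin L → 𝕏 => if ∀ j : Fin L, j ≠ i → y j = x j then p y else 0)
    (fun y _ => by split <;> [exact hp0 y; exact le_rfl]) (Finset.mem_univ x)
  simpa [pQ] using h

lemma le_margCoord (p : (Fin L → 𝕏) → ℝ) (hp0 : ∀ x, 0 ≤ p x) (i : Fin L) (x : Fin L → 𝕏) :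
    p x ≤ margCoord p i (x i) := by
  have h := Finset.single_le_sum
    (f := fun y : Fin L → 𝕏 => if y i = x i then p y else 0)
    (fun y _ => by split <;> [exact hp0 y; exact le_rfl]) (Finset.mem_univ x)
  simpa [margCoord] using h

lemma pA_zero (p : (Fin L → 𝕏) → ℝ) (hp1 : ∑ x, p x = 1) (x : Fin L → 𝕏) :
    pA p 0 x = 1 := by
  unfold pA
  simp only [Nat.not_lt_zero, false_implies, implies_true, if_true]
  exact hp1

lemma pA_top (p : (Fin L → 𝕏) → ℝ) (x : Fin L → 𝕏) :
    pA p L x = p x := by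
  unfold pA
  have h : ∀ y : Fin L → 𝕏, (∀ j : Fin L, (j : ℕ) < L → y j = x j) ↔ y = x := by
    intro y
    constructor
    · intro h; funext j; exact h j j.isLt
    · rintro rfl j _; rfl
  rw [Finset.sum_congr rfl fun y _ => if_congr (h y) rfl rfl]
  simp [Finset.sum_ite_eq']

/-- Reindexing a sum over vectors agreeing with `y` off coordinate `i`. -/
lemma sum_update (y : Fin L → 𝕏) (i : Fin L) (f : (Fin L → 𝕏) → ℝ) :
    (∑ x : Fin L → 𝕏, if ∀ j : Fin L, j ≠ i → y j = x j then f x else 0)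
      = ∑ a : 𝕏, f (Function.update y i a) := by
  classical
  rw [← Finset.sum_filter]
  refine Finset.sum_nbij' (fun x => x i) (fun a => Function.update y i a) ?_ ?_ ?_ ?_ ?_
  · intro a _; exact Finset.mem_univ _
  · intro a _
    simp only [Finset.mem_filter, Finset.mem_univ, true_and]
    intro j hj
    exact (Function.update_of_ne hj a y).symm
  · intro x hx
    simp only [Finset.mem_filter, Finset.mem_univ, true_and] at hx
    funext j
    by_cases hj : j = i
    · subst hj; rw [Function.update_self]
    · rw [Function.update_of_ne hj]; exact hx j hj
  · intro a _
    rw [Function.update_self]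
  · intro x hx
    simp only [Finset.mem_filter, Finset.mem_univ, true_and] at hx
    congr 1
    funext j
    by_cases hj : j = i
    · subst hj; rw [Function.update_self]
    · rw [Function.update_of_ne hj]; exact (hx j hj).symm

lemma pA_update (p : (Fin L → 𝕏) → ℝ) {k : ℕ} {i : Fin L} (hk : k ≤ (i : ℕ))
    (y : Fin L → 𝕏) (a : 𝕏) :
    pA p k (Function.update y i a) = pA p k y := by
  unfold pA
  apply Finset.sum_congr rfl
  intro z _
  apply if_congr _ rfl rfl
  have hupd : ∀ j : Fin L, (j : ℕ) < k → Function.update y i a j = y j := by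
    intro j hj
    have hne : j ≠ i := by rintro rfl; omega
    exact Function.update_of_ne hne a y
  constructor
  · intro h j hj; rw [← hupd j hj]; exact h j hj
  · intro h j hj; rw [hupd j hj]; exact h j hj

lemma pA_sum_update (p : (Fin L → 𝕏) → ℝ) (i : Fin L) (y : Fin L → 𝕏) :
    ∑ a : 𝕏, pA p ((i : ℕ) + 1) (Function.update y i a) = pA p (i : ℕ) y := by
  unfold pA
  rw [Finset.sum_comm]
  apply Finset.sum_congr rfl
  intro z _
  have key : ∀ a : 𝕏, (∀ j : Fin L, (j : ℕ) < (i : ℕ) + 1 → z j = Function.update y i a j)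
      ↔ ((∀ j : Fin L, (j : ℕ) < (i : ℕ) → z j = y j) ∧ z i = a) := by
    intro a
    constructor
    · intro h
      refine ⟨fun j hj => ?_, ?_⟩
      · have hne : j ≠ i := fun e => by subst e; omega
        have := h j (by omega)
        rwa [Function.update_of_ne hne] at this
      · have := h i (by omega)
        rwa [Function.update_self] at this
    · rintro ⟨h1, h2⟩ j hj
      by_cases e : j = i
      · subst e; rw [Function.update_self]; exact h2
      · rw [Function.update_of_ne e]
        have hji : (j : ℕ) ≠ (i : ℕ) := fun h => e (Fin.ext h)
        exact h1 j (by omega)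
  rw [Finset.sum_congr rfl fun a _ => if_congr (key a) rfl rfl]
  by_cases hP : ∀ j : Fin L, (j : ℕ) < (i : ℕ) → z j = y j
  · rw [if_pos hP,
      Finset.sum_congr rfl fun a _ => if_congr (and_iff_right hP) rfl rfl]
    have := Finset.sum_ite_eq (Finset.univ : Finset 𝕏) (z i) (fun _ => p z)
    simpa using this
  · rw [if_neg hP]
    apply Finset.sum_eq_zero
    intro a _
    rw [if_neg]
    rintro ⟨h1, -⟩
    exact hP h1

lemma pR_sum (p : (Fin L → 𝕏) → ℝ) (hp0 : ∀ x, 0 ≤ p x) (hp1 : ∑ x, p x = 1)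
    (i : Fin L) : ∑ x : Fin L → 𝕏, pR p i x = 1 := by
  have step1 : ∀ x : Fin L → 𝕏, pR p i x
      = ∑ y : Fin L → 𝕏, (if ∀ j : Fin L, j ≠ i → y j = x j then
          pA p ((i : ℕ) + 1) x / pA p (i : ℕ) x * p y else 0) := by
    intro x
    unfold pR pQ
    rw [mul_comm (pA p ((i : ℕ) + 1) x), mul_div_assoc, Finset.sum_mul]
    apply Finset.sum_congr rfl
    intro y _
    rw [ite_mul, zero_mul, mul_comm]
  calc ∑ x : Fin L → 𝕏, pR p i x
      = ∑ x : Fin L → 𝕏, ∑ y : Fin L → 𝕏, (if ∀ j : Fin L, j ≠ i → y j = x j then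
          pA p ((i : ℕ) + 1) x / pA p (i : ℕ) x * p y else 0) :=
        Finset.sum_congr rfl fun x _ => step1 x
    _ = ∑ y : Fin L → 𝕏, ∑ x : Fin L → 𝕏, (if ∀ j : Fin L, j ≠ i → y j = x j then
          pA p ((i : ℕ) + 1) x / pA p (i : ℕ) x * p y else 0) := Finset.sum_comm
    _ = ∑ y : Fin L → 𝕏, ∑ a : 𝕏,
          pA p ((i : ℕ) + 1) (Function.update y i a) / pA p (i : ℕ) (Function.update y i a)
            * p y :=
        Finset.sum_congr rfl fun y _ => sum_update y i _
    _ = ∑ y : Fin L → 𝕏, ∑ a : 𝕏,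
          pA p ((i : ℕ) + 1) (Function.update y i a) / pA p (i : ℕ) y * p y := by
        apply Finset.sum_congr rfl
        intro y _
        apply Finset.sum_congr rfl
        intro a _
        rw [pA_update p le_rfl]
    _ = ∑ y : Fin L → 𝕏,
          (∑ a : 𝕏, pA p ((i : ℕ) + 1) (Function.update y i a)) / pA p (i : ℕ) y * p y := by
        apply Finset.sum_congr rfl
        intro y _
        rw [Finset.sum_div, Finset.sum_mul]
    _ = ∑ y : Fin L → 𝕏, pA p (i : ℕ) y / pA p (i : ℕ) y * p y := by
        apply Finset.sum_congr rfl
        intro y _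
        rw [pA_sum_update p i y]
    _ = ∑ y : Fin L → 𝕏, p y := by
        apply Finset.sum_congr rfl
        intro y _
        by_cases hy : p y = 0
        · rw [hy, mul_zero]
        · have hpy : 0 < p y := lt_of_le_of_ne (hp0 y) (Ne.symm hy)
          have hA : 0 < pA p (i : ℕ) y := lt_of_lt_of_le hpy (le_pA p hp0 _ y)
          rw [div_self (ne_of_gt hA), one_mul]
    _ = 1 := hp1

lemma gibbs_step (p : (Fin L → 𝕏) → ℝ) (hp0 : ∀ x, 0 ≤ p x) (hp1 : ∑ x, p x = 1)
    (i : Fin L) : ∑ x : Fin L → 𝕏, p x * Real.log (pR p i x / p x) ≤ 0 := by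
  have hterm : ∀ x : Fin L → 𝕏, p x * Real.log (pR p i x / p x) ≤ pR p i x - p x := by
    intro x
    by_cases hx : p x = 0
    · rw [hx, zero_mul, sub_zero]
      exact div_nonneg (mul_nonneg (pA_nonneg p hp0 _ x) (pQ_nonneg p hp0 i x))
        (pA_nonneg p hp0 _ x)
    · have hpx : 0 < p x := lt_of_le_of_ne (hp0 x) (Ne.symm hx)
      have hA1 : 0 < pA p ((i : ℕ) + 1) x := lt_of_lt_of_le hpx (le_pA p hp0 _ x)
      have hA0 : 0 < pA p (i : ℕ) x := lt_of_lt_of_le hpx (le_pA p hp0 _ x)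
      have hQ : 0 < pQ p i x := lt_of_lt_of_le hpx (le_pQ p hp0 i x)
      have hr : 0 < pR p i x := div_pos (mul_pos hA1 hQ) hA0
      have hlog := Real.log_le_sub_one_of_pos (div_pos hr hpx)
      have h2 := mul_le_mul_of_nonneg_left hlog (le_of_lt hpx)
      calc p x * Real.log (pR p i x / p x) ≤ p x * (pR p i x / p x - 1) := h2
        _ = pR p i x - p x := by field_simp
  calc ∑ x : Fin L → 𝕏, p x * Real.log (pR p i x / p x)
      ≤ ∑ x : Fin L → 𝕏, (pR p i x - p x) := Finset.sum_le_sum fun x _ => hterm x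
    _ = 0 := by rw [Finset.sum_sub_distrib, pR_sum p hp0 hp1 i, hp1, sub_self]

/-- Total correlation is bounded by the sum of single-coordinate mutual
informations: `KL(p_X ‖ ∏ᵢ p_{X^{(i)}}) ≤ ∑ᵢ I(X^{(i)}; X^{(-i)})`. -/
theorem total_correlation_le_sum_mi
    (p : (Fin L → 𝕏) → ℝ) (hp0 : ∀ x, 0 ≤ p x) (hp1 : ∑ x, p x = 1) :
    (∑ x : Fin L → 𝕏, p x * Real.log (p x / ∏ i : Fin L, margCoord p i (x i)))
      ≤ ∑ i : Fin L, miCoordRest p i := by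
  classical
  have key : ∀ x : Fin L → 𝕏,
      p x * Real.log (p x / ∏ i : Fin L, margCoord p i (x i))
      = (∑ i : Fin L, p x * Real.log (p x /
            (margCoord p i (x i) * margRest p i (fun j => x j.1))))
        + ∑ i : Fin L, p x * Real.log (pR p i x / p x) := by
    intro x
    by_cases hx : p x = 0
    · simp [hx]
    have hpx : 0 < p x := lt_of_le_of_ne (hp0 x) (Ne.symm hx)
    have hA : ∀ k : ℕ, 0 < pA p k x := fun k => lt_of_lt_of_le hpx (le_pA p hp0 k x)
    have hQ : ∀ i : Fin L, 0 < pQ p i x := fun i => lt_of_lt_of_le hpx (le_pQ p hp0 i x)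
    have hC : ∀ i : Fin L, 0 < margCoord p i (x i) :=
      fun i => lt_of_lt_of_le hpx (le_margCoord p hp0 i x)
    have e1 : ∀ i : Fin L, Real.log (p x /
        (margCoord p i (x i) * margRest p i (fun j => x j.1)))
        = Real.log (p x) - Real.log (margCoord p i (x i)) - Real.log (pQ p i x) := by
      intro i
      rw [pQ_eq, Real.log_div (ne_of_gt hpx) (ne_of_gt (mul_pos (hC i) (hQ i))),
        Real.log_mul (ne_of_gt (hC i)) (ne_of_gt (hQ i)), sub_sub]
    have e2 : ∀ i : Fin L, Real.log (pR p i x / p x)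
        = (Real.log (pA p ((i : ℕ) + 1) x) - Real.log (pA p (i : ℕ) x))
          + Real.log (pQ p i x) - Real.log (p x) := by
      intro i
      unfold pR
      rw [Real.log_div (ne_of_gt (div_pos (mul_pos (hA _) (hQ i)) (hA _))) (ne_of_gt hpx),
        Real.log_div (ne_of_gt (mul_pos (hA _) (hQ i))) (ne_of_gt (hA _)),
        Real.log_mul (ne_of_gt (hA _)) (ne_of_gt (hQ i))]
      ring
    have e3 : Real.log (p x / ∏ i : Fin L, margCoord p i (x i))
        = Real.log (p x) - ∑ i : Fin L, Real.log (margCoord p i (x i)) := by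
      rw [Real.log_div (ne_of_gt hpx)
          (Finset.prod_ne_zero_iff.2 fun i _ => ne_of_gt (hC i)),
        Real.log_prod fun i _ => ne_of_gt (hC i)]
    have tele : ∑ i : Fin L,
        (Real.log (pA p ((i : ℕ) + 1) x) - Real.log (pA p (i : ℕ) x)) = Real.log (p x) := by
      rw [Fin.sum_univ_eq_sum_range
          (fun k => Real.log (pA p (k + 1) x) - Real.log (pA p k x)) L,
        Finset.sum_range_sub (fun k => Real.log (pA p k x)) L,
        pA_top, pA_zero p hp1, Real.log_one, sub_zero]
    simp only [e1, e2, e3]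
    rw [← Finset.sum_add_distrib]
    simp only [← mul_add]
    rw [← Finset.mul_sum]
    congr 1
    have : ∑ i : Fin L,
        (Real.log (p x) - Real.log (margCoord p i (x i)) - Real.log (pQ p i x)
          + ((Real.log (pA p ((i : ℕ) + 1) x) - Real.log (pA p (i : ℕ) x))
              + Real.log (pQ p i x) - Real.log (p x)))
        = ∑ i : Fin L,
          ((Real.log (pA p ((i : ℕ) + 1) x) - Real.log (pA p (i : ℕ) x))
            - Real.log (margCoord p i (x i))) :=
      Finset.sum_congr rfl fun i _ => by ring
    rw [this, Finset.sum_sub_distrib, tele]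
  calc (∑ x : Fin L → 𝕏, p x * Real.log (p x / ∏ i : Fin L, margCoord p i (x i)))
      = (∑ x : Fin L → 𝕏, ∑ i : Fin L, p x * Real.log (p x /
            (margCoord p i (x i) * margRest p i (fun j => x j.1))))
        + ∑ x : Fin L → 𝕏, ∑ i : Fin L, p x * Real.log (pR p i x / p x) := by
        rw [← Finset.sum_add_distrib]
        exact Finset.sum_congr rfl fun x _ => key x
    _ = (∑ i : Fin L, miCoordRest p i)
        + ∑ i : Fin L, ∑ x : Fin L → 𝕏, p x * Real.log (pR p i x / p x) := by
        have h1 : ∑ i : Fin L, miCoordRest p i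
            = ∑ x : Fin L → 𝕏, ∑ i : Fin L, p x * Real.log (p x /
                (margCoord p i (x i) * margRest p i (fun j => x j.1))) := by
          unfold miCoordRest
          exact Finset.sum_comm
        have h2 : (∑ x : Fin L → 𝕏, ∑ i : Fin L, p x * Real.log (pR p i x / p x))
            = ∑ i : Fin L, ∑ x : Fin L → 𝕏, p x * Real.log (pR p i x / p x) :=
          Finset.sum_comm
        rw [h1, h2]
    _ ≤ (∑ i : Fin L, miCoordRest p i) + 0 := by
        apply add_le_add le_rfl
        exact Finset.sum_nonpos fun i _ => gibbs_step p hp0 hp1 i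
    _ = ∑ i : Fin L, miCoordRest p i := add_zero _
end
end

section
/- Two-batch decomposition of KL against a product distribution: let X be a random vector on a finite alphabet, W ⊆ [L], and let D = D₋ ∪ D₊ be a partition of a set D disjoint from W. Writing W' := W ∪ D₋, the following identity holds: E_{X∘W}[KL(p(X∘D | X∘W) || p^⊗(X∘D | X∘W))] = E_{X∘W}[KL(p(X∘D₋ | X∘W) || p^⊗(X∘D₋ | X∘W))] + E_{X∘W'}[KL(p(X∘D₊ | X∘W') || p^⊗(X∘D₊ | X∘W'))] + ∑_{i∈D₊} I(X^{(i)}; X∘D₋ | X∘W). -/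
open scoped BigOperators
noncomputable section

variable {L : ℕ} {𝕏 : Type*} [Fintype 𝕏] [DecidableEq 𝕏]

/-- Marginal distribution of `p` on the coordinates indexed by `S`. -/
def margF (p : (Fin L → 𝕏) → ℝ) (S : Finset (Fin L)) (f : S → 𝕏) : ℝ :=
  ∑ x : Fin L → 𝕏, if (fun j : S => x j.1) = f then p x else 0

/-- Conditional mutual information `I(X^{(i)} ; X ∘ D | X ∘ W)`. -/
def condMI (p : (Fin L → 𝕏) → ℝ) (i : Fin L) (D W : Finset (Fin L)) : ℝ :=
  ∑ x : Fin L → 𝕏,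
    p x * Real.log
      ((margF p (insert i (W ∪ D)) (fun j => x j.1) * margF p W (fun j => x j.1)) /
        (margF p (insert i W) (fun j => x j.1) * margF p (W ∪ D) (fun j => x j.1)))

/-- Expected KL divergence (over `X ∘ W`) between the conditional law of `X ∘ D`
given `X ∘ W` and the product of its conditional one-dimensional marginals. -/
def eklProd (p : (Fin L → 𝕏) → ℝ) (W D : Finset (Fin L)) : ℝ :=
  ∑ x : Fin L → 𝕏,
    p x * Real.log
      ((margF p (W ∪ D) (fun j => x j.1) / margF p W (fun j => x j.1)) /
        (∏ i ∈ D, (margF p (insert i W) (fun j => x j.1) / margF p W (fun j => x j.1))))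

lemma margF_pos {p : (Fin L → 𝕏) → ℝ} (hp0 : ∀ x, 0 ≤ p x) {x : Fin L → 𝕏}
    (hx : 0 < p x) (S : Finset (Fin L)) : 0 < margF p S (fun j => x j.1) := by
  unfold margF
  have hle : p x ≤ ∑ y : Fin L → 𝕏,
      if (fun j : S => y j.1) = (fun j : S => x j.1) then p y else 0 := by
    have := Finset.single_le_sum
      (f := fun y : Fin L → 𝕏 => if (fun j : S => y j.1) = (fun j : S => x j.1) then p y else 0)
      (fun y _ => by split <;> simp [hp0 y]) (Finset.mem_univ x)
    simpa using this
  exact lt_of_lt_of_le hx hle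

lemma log_quot_prod (u v : ℝ) (hu : 0 < u) (hv : 0 < v) (s : Finset (Fin L)) (h : Fin L → ℝ)
    (hh : ∀ i ∈ s, 0 < h i) :
    Real.log ((u / v) / ∏ i ∈ s, (h i / v)) =
      Real.log u - Real.log v - ∑ i ∈ s, (Real.log (h i) - Real.log v) := by
  have hprod : (0:ℝ) < ∏ i ∈ s, (h i / v) :=
    Finset.prod_pos fun i hi => div_pos (hh i hi) hv
  rw [Real.log_div (div_pos hu hv).ne' hprod.ne', Real.log_div hu.ne' hv.ne',
    Real.log_prod (fun i hi => (div_pos (hh i hi) hv).ne')]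
  congr 1
  exact Finset.sum_congr rfl fun i hi => Real.log_div (hh i hi).ne' hv.ne'

/-- Two-batch decomposition of the expected conditional KL against the
product distribution. -/
theorem ekl_two_batch_decomposition
    (p : (Fin L → 𝕏) → ℝ) (hp0 : ∀ x, 0 ≤ p x) (hp1 : ∑ x, p x = 1)
    (W Dm Dp : Finset (Fin L))
    (hWDm : Disjoint W Dm) (hWDp : Disjoint W Dp) (hDmDp : Disjoint Dm Dp) :
    eklProd p W (Dm ∪ Dp) =
      eklProd p W Dm + eklProd p (W ∪ Dm) Dp +
        ∑ i ∈ Dp, condMI p i Dm W := by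
  simp only [eklProd, condMI, ← Finset.union_assoc]
  rw [Finset.sum_comm (s := Dp)]
  rw [← Finset.sum_add_distrib, ← Finset.sum_add_distrib]
  refine Finset.sum_congr rfl fun x _ => ?_
  rcases (hp0 x).eq_or_lt with h | h
  · simp [← h]
  · rw [← Finset.mul_sum, ← mul_add, ← mul_add]
    congr 1
    rw [show W ∪ (Dm ∪ Dp) = W ∪ Dm ∪ Dp from (Finset.union_assoc W Dm Dp).symm]
    have Hpos := margF_pos hp0 h
    set a := margF p W (fun j => x j.1) with ha'
    set b := margF p (W ∪ Dm) (fun j => x j.1) with hb'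
    set c := margF p (W ∪ Dm ∪ Dp) (fun j => x j.1) with hc'
    have ha : 0 < a := Hpos W
    have hb : 0 < b := Hpos (W ∪ Dm)
    have hc : 0 < c := Hpos (W ∪ Dm ∪ Dp)
    have hf : ∀ i : Fin L, 0 < margF p (insert i W) (fun j => x j.1) :=
      fun i => Hpos (insert i W)
    have hg : ∀ i : Fin L, 0 < margF p (insert i (W ∪ Dm)) (fun j => x j.1) :=
      fun i => Hpos (insert i (W ∪ Dm))
    rw [log_quot_prod c a hc ha _ _ (fun i _ => hf i),
      log_quot_prod b a hb ha _ _ (fun i _ => hf i),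
      log_quot_prod c b hc hb _ _ (fun i _ => hg i),
      Finset.sum_union hDmDp]
    have hMI : ∑ i ∈ Dp, Real.log
        ((margF p (insert i (W ∪ Dm)) (fun j => x j.1) * a) /
          (margF p (insert i W) (fun j => x j.1) * b)) =
        ∑ i ∈ Dp, (Real.log (margF p (insert i (W ∪ Dm)) (fun j => x j.1)) + Real.log a
          - (Real.log (margF p (insert i W) (fun j => x j.1)) + Real.log b)) := by
      refine Finset.sum_congr rfl fun i _ => ?_
      rw [Real.log_div (mul_pos (hg i) ha).ne' (mul_pos (hf i) hb).ne',
        Real.log_mul (hg i).ne' ha.ne', Real.log_mul (hf i).ne' hb.ne']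
    rw [hMI]
    simp only [Finset.sum_sub_distrib, Finset.sum_add_distrib, Finset.sum_const,
      nsmul_eq_mul]
    ring
end
end
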